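/- Let Λ, X be finite and Φ a potential on Λ. The Gibbs one-point system q_t^z(x) = exp(−H_t^z(x)) / Σ_{α∈X} exp(−H_t^z(α)), with H_t^z(x) = Σ_{J⊆Λ\{t}} Φ_{{t}∪J}(x z_J), satisfies the consistency conditions: for all distinct t,s ∈ Λ, x,u,y,v ∈ X, z ∈ X^{Λ\{t,s}}, q_t^{zy}(x) q_s^{zx}(v) q_t^{zv}(u) q_s^{zu}(y) = q_t^{zy}(u) q_s^{zu}(v) q_t^{zv}(x) q_s^{zx}(y). -/
import Mathlib


def cat {Λ X : Type*} [DecidableEq Λ] (t : Λ) (x : X) (z : {s : Λ // s ≠ t} → X) : Λ → X :=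
  fun s => if h : s = t then x else z ⟨s, h⟩

def catT {Λ X : Type*} [DecidableEq Λ] (t s : Λ) (y : X) (z : {r : Λ // r ≠ t ∧ r ≠ s} → X) :
    {r : Λ // r ≠ t} → X :=
  fun r => if h : r.1 = s then y else z ⟨r.1, r.2, h⟩

def catS {Λ X : Type*} [DecidableEq Λ] (t s : Λ) (x : X) (z : {r : Λ // r ≠ t ∧ r ≠ s} → X) :
    {r : Λ // r ≠ s} → X :=
  fun r => if h : r.1 = t then x else z ⟨r.1, h, r.2⟩
/-- The one-point Hamiltonian at `t` with boundary condition `z` built from a potential. -/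
noncomputable def Ham {Λ X : Type*} [DecidableEq Λ] [Fintype Λ]
    (Φ : Finset Λ → (Λ → X) → ℝ) (t : Λ) (z : {s : Λ // s ≠ t} → X) (x : X) : ℝ :=
  ∑ J ∈ (Finset.univ.erase t).powerset, Φ (insert t J) (cat t x z)

/-- The Gibbs one-point system built from a potential. -/
noncomputable def gibbsQ {Λ X : Type*} [DecidableEq Λ] [Fintype Λ] [Fintype X]
    (Φ : Finset Λ → (Λ → X) → ℝ) (t : Λ) (z : {s : Λ // s ≠ t} → X) (x : X) : ℝ :=
  Real.exp (-(Ham Φ t z x)) / ∑ α : X, Real.exp (-(Ham Φ t z α))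

lemma cfg_eq {Λ X : Type*} [DecidableEq Λ] {t s : Λ} (hts : t ≠ s) (a b : X)
    (z : {r : Λ // r ≠ t ∧ r ≠ s} → X) :
    cat s b (catS t s a z) = cat t a (catT t s b z) := by
  funext r
  unfold cat catS catT
  by_cases h1 : r = t <;> by_cases h2 : r = s <;> simp_all

lemma ham_decomp {Λ X : Type*} [DecidableEq Λ] [Fintype Λ]
    (Φ : Finset Λ → (Λ → X) → ℝ) {t s : Λ} (hts : t ≠ s)
    (b : X) (z : {r : Λ // r ≠ t ∧ r ≠ s} → X) (a : X) :
    Ham Φ t (catT t s b z) a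
      = (∑ J ∈ ((Finset.univ.erase t).erase s).powerset,
          Φ (insert t (insert s J)) (cat t a (catT t s b z)))
        + ∑ J ∈ ((Finset.univ.erase t).erase s).powerset,
          Φ (insert t J) (cat t a (catT t s b z)) := by
  unfold Ham
  have hs : (Finset.univ.erase t : Finset Λ) = insert s ((Finset.univ.erase t).erase s) := by
    rw [Finset.insert_erase]
    simp [Ne.symm hts]
  rw [hs, Finset.sum_powerset_insert (Finset.notMem_erase _ _), add_comm,
      Finset.erase_insert (Finset.notMem_erase _ _)]

lemma catS_eq_catT {Λ X : Type*} [DecidableEq Λ] (t s : Λ) (a : X)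
    (z : {r : Λ // r ≠ t ∧ r ≠ s} → X) :
    catS t s a z = catT s t a (fun q => z ⟨q.1, q.2.2, q.2.1⟩) := rfl

theorem stmt8 {Λ X : Type*} [DecidableEq Λ] [Fintype Λ] [Fintype X] [Nonempty X]
    (Φ : Finset Λ → (Λ → X) → ℝ)
    (hloc : ∀ V : Finset Λ, ∀ x y : Λ → X, (∀ s ∈ V, x s = y s) → Φ V x = Φ V y) :
    ∀ t s : Λ, t ≠ s → ∀ x u y v : X, ∀ z : {r : Λ // r ≠ t ∧ r ≠ s} → X,
      gibbsQ Φ t (catT t s y z) x * gibbsQ Φ s (catS t s x z) v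
          * gibbsQ Φ t (catT t s v z) u * gibbsQ Φ s (catS t s u z) y
        = gibbsQ Φ t (catT t s y z) u * gibbsQ Φ s (catS t s u z) v
            * gibbsQ Φ t (catT t s v z) x * gibbsQ Φ s (catS t s x z) y := by
  intro t s hts x u y v z
  -- notation
  set E : Finset Λ := (Finset.univ.erase t).erase s with hE
  have hE' : ((Finset.univ.erase s).erase t : Finset Λ) = E := by
    rw [hE, Finset.erase_right_comm]
  -- common part A, private parts B (for t) and C (for s)
  set A : X → X → ℝ := fun a b => ∑ J ∈ E.powerset,
      Φ (insert t (insert s J)) (cat t a (catT t s b z)) with hA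
  set B : X → X → ℝ := fun a b => ∑ J ∈ E.powerset,
      Φ (insert t J) (cat t a (catT t s b z)) with hB
  set C : X → X → ℝ := fun a b => ∑ J ∈ E.powerset,
      Φ (insert s J) (cat s b (catS t s a z)) with hC
  -- membership facts
  have hmemE : ∀ J ∈ E.powerset, ∀ r ∈ J, r ≠ t ∧ r ≠ s := by
    intro J hJ r hr
    have := Finset.mem_powerset.mp hJ hr
    rw [hE] at this
    exact ⟨Finset.ne_of_mem_erase (Finset.mem_of_mem_erase this), Finset.ne_of_mem_erase this⟩
  -- decomposition of t-Hamiltonians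
  have hdT : ∀ a b : X, Ham Φ t (catT t s b z) a = A a b + B a b := fun a b =>
    ham_decomp Φ hts b z a
  -- decomposition of s-Hamiltonians
  have hdS : ∀ a b : X, Ham Φ s (catS t s a z) b = A a b + C a b := by
    intro a b
    rw [catS_eq_catT]
    rw [ham_decomp Φ hts.symm a (fun q => z ⟨q.1, q.2.2, q.2.1⟩) b]
    rw [← catS_eq_catT, hE']
    congr 1
    rw [hA]
    apply Finset.sum_congr rfl
    intro J hJ
    rw [Finset.insert_comm, cfg_eq hts a b z]
  -- B does not depend on its second argument
  have hBind : ∀ a b b' : X, B a b = B a b' := by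
    intro a b b'
    rw [hB]
    apply Finset.sum_congr rfl
    intro J hJ
    apply hloc
    intro r hr
    rcases Finset.mem_insert.mp hr with h | h
    · subst h; simp [cat]
    · obtain ⟨h1, h2⟩ := hmemE J hJ r h
      simp [cat, catT, h1, h2]
  -- C does not depend on its first argument
  have hCind : ∀ a a' b : X, C a b = C a' b := by
    intro a a' b
    rw [hC]
    apply Finset.sum_congr rfl
    intro J hJ
    apply hloc
    intro r hr
    rcases Finset.mem_insert.mp hr with h | h
    · subst h; simp [cat]
    · obtain ⟨h1, h2⟩ := hmemE J hJ r h
      simp [cat, catS, h1, h2]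
  -- the key Hamiltonian identity
  have key : Ham Φ t (catT t s y z) x + Ham Φ s (catS t s x z) v
      + Ham Φ t (catT t s v z) u + Ham Φ s (catS t s u z) y
      = Ham Φ t (catT t s y z) u + Ham Φ s (catS t s u z) v
      + Ham Φ t (catT t s v z) x + Ham Φ s (catS t s x z) y := by
    rw [hdT x y, hdS x v, hdT u v, hdS u y, hdT u y, hdS u v, hdT x v, hdS x y]
    rw [hBind x y v, hBind u v y, hCind x u v, hCind u x y]
    ring
  -- conclude
  unfold gibbsQ
  have hexp : Real.exp (-(Ham Φ t (catT t s y z) x)) * Real.exp (-(Ham Φ s (catS t s x z) v))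
      * Real.exp (-(Ham Φ t (catT t s v z) u)) * Real.exp (-(Ham Φ s (catS t s u z) y))
      = Real.exp (-(Ham Φ t (catT t s y z) u)) * Real.exp (-(Ham Φ s (catS t s u z) v))
      * Real.exp (-(Ham Φ t (catT t s v z) x)) * Real.exp (-(Ham Φ s (catS t s x z) y)) := by
    rw [← Real.exp_add, ← Real.exp_add, ← Real.exp_add,
        ← Real.exp_add, ← Real.exp_add, ← Real.exp_add]
    congr 1
    linarith
  rw [div_mul_div_comm, div_mul_div_comm, div_mul_div_comm,
      div_mul_div_comm, div_mul_div_comm, div_mul_div_comm, hexp]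
  ring
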